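/- Let μ ∈ ℝ, let 0 < ε < 1/2, let σ > 0 and σ₀ > 0 satisfy ∫₀¹ Φ(−|μ − log u|/σ₀) du = ε and ∫₀¹ Φ(−|μ − log u|/σ) du ≤ ε, let C > 0, let Z be a standard normal random variable, and let q ∈ ℝ satisfy Φ(q) = 3/4. Then the interquartile range of X = C e^{σZ} satisfies IQR(X) ≤ 2C sinh(q σ₀). -/
import Mathlib


open MeasureTheory ProbabilityTheory
open scoped ENNReal

/-- The standard normal cumulative distribution function. -/
noncomputable def Phi (x : ℝ) : ℝ :=
  ∫ t in Set.Iic x, Real.exp (-t^2/2) / Real.sqrt (2 * Real.pi)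

noncomputable def phiD (t : ℝ) : ℝ := Real.exp (-t^2/2) / Real.sqrt (2 * Real.pi)

lemma phiD_pos (t : ℝ) : 0 < phiD t := by
  have := Real.pi_pos
  unfold phiD; positivity

lemma integrable_phiD : Integrable phiD := by
  have h : Integrable (fun x : ℝ => Real.exp (-(1/2) * x^2) / Real.sqrt (2*Real.pi)) :=
    (integrable_exp_neg_mul_sq (by norm_num)).div_const _
  refine h.congr (Filter.Eventually.of_forall fun x => ?_)
  unfold phiD; ring_nf

lemma integral_phiD : ∫ t, phiD t = 1 := by
  have h : ∫ x : ℝ, Real.exp (-(1/2) * x^2) = Real.sqrt (Real.pi / (1/2)) :=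
    integral_gaussian (1/2)
  have h2 : ∫ t, phiD t = (∫ x : ℝ, Real.exp (-(1/2) * x^2)) / Real.sqrt (2*Real.pi) := by
    rw [← integral_div]
    congr 1; funext x; unfold phiD; ring_nf
  rw [h2, h]
  have : Real.pi / (1/2) = 2 * Real.pi := by ring
  rw [this]
  have := Real.pi_pos
  field_simp

lemma Phi_eq (x : ℝ) : Phi x = ∫ t in Set.Iic x, phiD t := rfl

lemma Phi_mono : Monotone Phi := by
  intro a b hab
  rw [Phi_eq, Phi_eq]
  exact setIntegral_mono_set integrable_phiD.integrableOn
    (Filter.Eventually.of_forall fun t => (phiD_pos t).le)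
    (HasSubset.Subset.eventuallyLE (Set.Iic_subset_Iic.2 hab))

lemma Phi_strictMono : StrictMono Phi := by
  intro a b hab
  have h : Phi b - Phi a = ∫ t in a..b, phiD t := by
    rw [Phi_eq, Phi_eq]
    exact intervalIntegral.integral_Iic_sub_Iic integrable_phiD.integrableOn integrable_phiD.integrableOn
  have hpos : 0 < ∫ t in a..b, phiD t :=
    intervalIntegral.intervalIntegral_pos_of_pos integrable_phiD.intervalIntegrable phiD_pos hab
  linarith [h ▸ hpos]

lemma Phi_add_Phi_neg (x : ℝ) : Phi x + Phi (-x) = 1 := by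
  have heven : ∀ t : ℝ, phiD (-t) = phiD t := by
    intro t; unfold phiD; rw [neg_pow]; ring_nf
  have h1 : Phi x = ∫ t in Set.Ioi (-x), phiD t := by
    rw [Phi_eq, ← integral_comp_neg_Iic x phiD]
    exact setIntegral_congr_fun measurableSet_Iic fun t _ => (heven t).symm
  rw [h1, Phi_eq]
  rw [add_comm, intervalIntegral.integral_Iic_add_Ioi integrable_phiD.integrableOn integrable_phiD.integrableOn]
  exact integral_phiD

lemma Phi_zero : Phi 0 = 1/2 := by
  have := Phi_add_Phi_neg 0
  rw [neg_zero] at this; linarith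

lemma Phi_nonneg (x : ℝ) : 0 ≤ Phi x :=
  setIntegral_nonneg measurableSet_Iic fun t _ => (phiD_pos t).le

lemma Phi_le_one (x : ℝ) : Phi x ≤ 1 := by
  rw [Phi_eq, ← integral_phiD]
  exact setIntegral_le_integral integrable_phiD (Filter.Eventually.of_forall fun t => (phiD_pos t).le)

lemma measurable_Phi : Measurable Phi := Phi_mono.measurable

/-- CDF of the standard gaussian equals Phi. -/
lemma gaussianReal_Iic (a : ℝ) : ((gaussianReal 0 1) (Set.Iic a)).toReal = Phi a := by
  rw [gaussianReal_apply_eq_integral 0 one_ne_zero]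
  rw [ENNReal.toReal_ofReal (setIntegral_nonneg measurableSet_Iic
    fun t _ => gaussianPDFReal_nonneg 0 1 t)]
  rw [Phi_eq]
  refine setIntegral_congr_fun measurableSet_Iic fun t _ => ?_
  unfold gaussianPDFReal phiD
  push_cast
  rw [mul_one, mul_one, sub_zero, inv_mul_eq_div]

/-- If the unconditional error at `σ` is at most `ε` and `σ₀` attains error
exactly `ε`, then the interquartile range of `X = C e^{σZ}` is bounded by
`2C sinh(q σ₀)`, where `Φ(q) = 3/4`. -/
theorem iqr_bound_under_error_tolerance (μ ε σ σ₀ C q : ℝ)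
    (hε : 0 < ε) (hε' : ε < 1/2) (hσ : 0 < σ) (hσ₀ : 0 < σ₀)
    (h₀ : (∫ u in (0:ℝ)..1, Phi (-|μ - Real.log u| / σ₀)) = ε)
    (h₁ : (∫ u in (0:ℝ)..1, Phi (-|μ - Real.log u| / σ)) ≤ ε)
    (hC : 0 < C) (hq : Phi q = 3/4)
    (x₁ x₂ : ℝ)
    (hx₁ : ((gaussianReal 0 1).map (fun z => C * Real.exp (σ * z)) (Set.Iic x₁)).toReal
      = 3/4)
    (hx₂ : ((gaussianReal 0 1).map (fun z => C * Real.exp (σ * z)) (Set.Iic x₂)).toReal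
      = 1/4) :
    x₁ - x₂ ≤ 2 * C * Real.sinh (q * σ₀) := by
  have hmeas : Measurable fun z : ℝ => C * Real.exp (σ * z) :=
    (Real.measurable_exp.comp (measurable_const.mul measurable_id)).const_mul C
  -- reduce the map CDF to Phi
  have key : ∀ x : ℝ, ∀ p : ℝ, 0 < p →
      ((gaussianReal 0 1).map (fun z => C * Real.exp (σ * z)) (Set.Iic x)).toReal = p →
      0 < x ∧ Phi (Real.log (x / C) / σ) = p := by
    intro x p hp hx
    rw [Measure.map_apply hmeas measurableSet_Iic] at hx
    have hxpos : 0 < x := by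
      by_contra hle
      push_neg at hle
      have hemp : (fun z : ℝ => C * Real.exp (σ * z)) ⁻¹' Set.Iic x = ∅ := by
        ext z
        simp only [Set.mem_preimage, Set.mem_Iic, Set.mem_empty_iff_false, iff_false, not_le]
        exact lt_of_le_of_lt hle (by positivity)
      rw [hemp] at hx
      simp at hx
      linarith
    refine ⟨hxpos, ?_⟩
    have hpre : (fun z : ℝ => C * Real.exp (σ * z)) ⁻¹' Set.Iic x
        = Set.Iic (Real.log (x / C) / σ) := by
      ext z
      simp only [Set.mem_preimage, Set.mem_Iic]
      rw [mul_comm C (Real.exp (σ * z)), mul_comm σ z, ← le_div_iff₀ hC,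
        ← Real.le_log_iff_exp_le (div_pos hxpos hC), ← le_div_iff₀ hσ]
    rw [hpre, gaussianReal_Iic] at hx
    exact hx
  obtain ⟨hx₁pos, hP1⟩ := key x₁ (3/4) (by norm_num) hx₁
  obtain ⟨hx₂pos, hP2⟩ := key x₂ (1/4) (by norm_num) hx₂
  -- q is positive
  have hqpos : 0 < q := by
    have : Phi 0 < Phi q := by rw [Phi_zero, hq]; norm_num
    exact Phi_strictMono.lt_iff_lt.mp this
  -- Phi(-q) = 1/4
  have hPnq : Phi (-q) = 1/4 := by
    have := Phi_add_Phi_neg q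
    rw [hq] at this; linarith
  -- identify the quantiles
  have hq1 : Real.log (x₁ / C) / σ = q :=
    Phi_strictMono.injective (by rw [hP1, hq])
  have hq2 : Real.log (x₂ / C) / σ = -q :=
    Phi_strictMono.injective (by rw [hP2, hPnq])
  -- σ ≤ σ₀
  have hσσ₀ : σ ≤ σ₀ := by
    by_contra hlt
    push_neg at hlt  -- σ₀ < σ
    set f := fun u : ℝ => Phi (-|μ - Real.log u| / σ₀) with hf
    set g := fun u : ℝ => Phi (-|μ - Real.log u| / σ) with hg
    have hmf : Measurable f :=
      measurable_Phi.comp (((measurable_const.sub Real.measurable_log).abs.neg).div_const _)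
    have hmg : Measurable g :=
      measurable_Phi.comp (((measurable_const.sub Real.measurable_log).abs.neg).div_const _)
    have hbdd : ∀ (h : ℝ → ℝ), Measurable h → (∀ u, ‖h u‖ ≤ 1) →
        IntervalIntegrable h volume 0 1 := by
      intro h hm hb
      refine IntervalIntegrable.mono_fun (intervalIntegrable_const (c := (1:ℝ)))
        hm.aestronglyMeasurable (Filter.Eventually.of_forall fun u => ?_)
      simpa using hb u
    have hPhiB : ∀ x : ℝ, ‖Phi x‖ ≤ 1 := fun x => by
      rw [Real.norm_eq_abs, abs_le]; exact ⟨by linarith [Phi_nonneg x], Phi_le_one x⟩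
    have hif : IntervalIntegrable f volume 0 1 := hbdd f hmf fun u => hPhiB _
    have hig : IntervalIntegrable g volume 0 1 := hbdd g hmg fun u => hPhiB _
    have hle : f ≤ᵐ[volume.restrict (Set.Ioc (0:ℝ) 1)] g := by
      refine Filter.Eventually.of_forall fun u => ?_
      refine Phi_mono ?_
      have ha : (0:ℝ) ≤ |μ - Real.log u| := abs_nonneg _
      have h1 : |μ - Real.log u| / σ ≤ |μ - Real.log u| / σ₀ := by
        rw [div_le_div_iff₀ hσ hσ₀]
        exact mul_le_mul_of_nonneg_left hlt.le ha
      rw [neg_div, neg_div]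
      linarith
    have hlt' : volume.restrict (Set.Ioc (0:ℝ) 1) {u | f u < g u} ≠ 0 := by
      have hSm : MeasurableSet {u | f u < g u} := measurableSet_lt hmf hmg
      rw [Measure.restrict_apply hSm]
      have hsub : Set.Ioc (0:ℝ) 1 \ {Real.exp μ} ⊆ {u | f u < g u} ∩ Set.Ioc (0:ℝ) 1 := by
        rintro u ⟨hu, hne⟩
        refine ⟨?_, hu⟩
        have hlog : Real.log u ≠ μ := by
          intro h
          apply hne
          rw [Set.mem_singleton_iff, ← h, Real.exp_log hu.1]
        have ha : (0:ℝ) < |μ - Real.log u| := by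
          rw [abs_pos, sub_ne_zero]
          exact fun h => hlog h.symm
        have h1 : |μ - Real.log u| / σ < |μ - Real.log u| / σ₀ := by
          rw [div_lt_div_iff₀ hσ hσ₀]
          exact (mul_lt_mul_iff_right₀ ha).mpr hlt
        refine Phi_strictMono ?_
        show -|μ - Real.log u| / σ₀ < -|μ - Real.log u| / σ
        rw [neg_div, neg_div]
        linarith
      have hmeasdiff : volume (Set.Ioc (0:ℝ) 1 \ {Real.exp μ}) = 1 := by
        rw [measure_diff_null (measure_singleton _)]
        simp [Real.volume_Ioc]
      intro h0
      have : volume (Set.Ioc (0:ℝ) 1 \ {Real.exp μ})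
          ≤ volume ({u | f u < g u} ∩ Set.Ioc (0:ℝ) 1) := measure_mono hsub
      rw [h0, hmeasdiff] at this
      simp at this
    have hstrict : (∫ u in (0:ℝ)..1, f u) < ∫ u in (0:ℝ)..1, g u :=
      intervalIntegral.integral_lt_integral_of_ae_le_of_measure_setOf_lt_ne_zero
        (by norm_num) hif hig hle hlt'
    rw [h₀] at hstrict
    linarith
  -- conclude
  have hx₁eq : x₁ = C * Real.exp (σ * q) := by
    have hl : Real.log (x₁ / C) = σ * q := by
      field_simp at hq1; linarith
    have : x₁ / C = Real.exp (σ * q) := by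
      rw [← hl, Real.exp_log (by positivity)]
    field_simp at this
    linarith
  have hx₂eq : x₂ = C * Real.exp (-(σ * q)) := by
    have hl : Real.log (x₂ / C) = -(σ * q) := by
      field_simp at hq2; linarith
    have : x₂ / C = Real.exp (-(σ * q)) := by
      rw [← hl, Real.exp_log (by positivity)]
    field_simp at this
    linarith
  have hsinh : x₁ - x₂ = 2 * C * Real.sinh (σ * q) := by
    rw [hx₁eq, hx₂eq, Real.sinh_eq]
    ring
  have hmono : Real.sinh (σ * q) ≤ Real.sinh (q * σ₀) := by
    rw [Real.sinh_le_sinh]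
    nlinarith
  rw [hsinh]
  nlinarith
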